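/- Let K be a commutative semiring and let (A, T, d) be a deterministic tree tensor network over K representing f^1,…,f^s : {0,1}^n → K (s = d(root)). Then there exists a deterministic s-output structured-decomposable (+,×)-circuit over K, structured by the vtree (T, λ) given by the leaf labeling of T, whose k-th output computes f^k for every k ∈ [s]; moreover, for every node v of T the circuit has exactly d(v) +-gates g^1_v,…,g^{d(v)}_v mapped to v and g^k_v computes exactly Â(v)[·,k]. -/

import Mathlib

/-! ## Tensor trains -/

/-- `ttSuffix n χ A α k s` is the `(s,0)` entry of the matrix product
`M_{n-k}(α (n-k)) ⋯ M_{n-1}(α (n-1))` of the last `k` matrices of the tensor train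
(0-indexed variables `0,…,n-1`, bond dimensions `χ 0, …, χ n`). -/
def ttSuffix {K : Type} [CommSemiring K] (n : ℕ) (χ : ℕ → ℕ)
    (A : ℕ → ℕ → ℕ → Bool → K) (α : ℕ → Bool) : ℕ → ℕ → K
  | 0, s => if s = 0 then 1 else 0
  | k + 1, s =>
      ∑ t ∈ Finset.range (χ (n - k)),
        A (n - (k + 1)) s t (α (n - (k + 1))) * ttSuffix n χ A α k t

/-- The pseudo-Boolean function represented by a tensor train: the unique entry of
`M_0(α 0) ⋯ M_{n-1}(α (n-1))`. -/
def ttFun {K : Type} [CommSemiring K] (n : ℕ) (χ : ℕ → ℕ)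
    (A : ℕ → ℕ → ℕ → Bool → K) (α : ℕ → Bool) : K :=
  ttSuffix n χ A α n 0

/-! ## Nondeterministic edge-valued decision diagrams -/

/-- An ordered nondeterministic edge-valued decision diagram over `K` on the (0-indexed)
variables `x_0 ≺ ⋯ ≺ x_{n-1}`.  Nodes carry a `level`: a node of level `r < n` is labeled with
the variable `x_r`; the sink is the unique node of level `n` and is unlabeled.  Levels strictly
increase along edges (so the diagram is an ordered, read-once DAG), the source is the unique
node without incoming edges and the sink the unique node without outgoing edges.  Each edge
carries a Boolean label and a weight in `K`. -/
structure NdEVDD (K : Type) (n : ℕ) where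
  V : Type
  [fintypeV : Fintype V]
  [decEqV : DecidableEq V]
  source : V
  sink : V
  level : V → ℕ
  edge : V → Bool → V → Bool
  w : V → Bool → V → K
  sink_level : level sink = n
  nonsink_level : ∀ v, v ≠ sink → level v < n
  edge_level : ∀ u b v, edge u b v = true → level u < level v
  source_no_in : ∀ u b, edge u b source = false
  sink_no_out : ∀ b v, edge sink b v = false
  single_source : ∀ v, v ≠ source → ∃ u b, edge u b v = true
  single_sink : ∀ v, v ≠ sink → ∃ b u, edge v b u = true

attribute [instance] NdEVDD.fintypeV NdEVDD.decEqV

namespace NdEVDD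

variable {K : Type} {n : ℕ}

/-- `D.IsPathFrom α v p`: `p` is a path from `v` to the sink that leaves every node labeled
`x_i` along an edge labeled `α i`. -/
def IsPathFrom (D : NdEVDD K n) (α : ℕ → Bool) : D.V → List (Bool × D.V) → Prop
  | v, [] => v = D.sink
  | v, (b, u) :: p => D.edge v b u = true ∧ b = α (D.level v) ∧ IsPathFrom D α u p

/-- The product of the weights of the edges of a path. -/
def pathWeight [CommSemiring K] (D : NdEVDD K n) : D.V → List (Bool × D.V) → K
  | _, [] => 1
  | v, (b, u) :: p => D.w v b u * pathWeight D u p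

/-- The function represented by the node `v` of the diagram: the sum, over all paths from `v`
to the sink consistent with the assignment `α`, of the product of the edge weights
(`0` if there is no such path). -/
noncomputable def nodeFun [CommSemiring K] (D : NdEVDD K n) (α : ℕ → Bool) (v : D.V) : K :=
  ∑ᶠ (p : List (Bool × D.V)) (_ : D.IsPathFrom α v p), D.pathWeight v p

/-- The function represented by the diagram: the path-sum from the source. -/
noncomputable def eval [CommSemiring K] (D : NdEVDD K n) (α : ℕ → Bool) : K :=
  D.nodeFun α D.source

/-- A diagram is complete when every source-to-sink path reads every variable; with levels
this means the source is at level `0` and every edge advances the level by exactly one. -/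
def Complete (D : NdEVDD K n) : Prop :=
  D.level D.source = 0 ∧ ∀ u b v, D.edge u b v = true → D.level v = D.level u + 1

/-- A diagram is deterministic when every node has at most one outgoing `0`-edge and at most
one outgoing `1`-edge. -/
def Deterministic (D : NdEVDD K n) : Prop :=
  ∀ u b v₁ v₂, D.edge u b v₁ = true → D.edge u b v₂ = true → v₁ = v₂

/-- The number of edges of the diagram. -/
def edgeCount (D : NdEVDD K n) : ℕ :=
  (Finset.univ.filter fun t : D.V × Bool × D.V => D.edge t.1 t.2.1 t.2.2 = true).card

end NdEVDD
/-! ## Vtrees -/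

/-- A vtree: a rooted binary tree whose leaves are labeled with (distinct) variables. -/
inductive VTree : Type
  | leaf (x : ℕ)
  | node (l r : VTree)

namespace VTree

/-- The set of variables on the leaves of a vtree. -/
def vars : VTree → Set ℕ
  | .leaf x => {x}
  | .node l r => l.vars ∪ r.vars

/-- The list of leaf labels, read from left to right. -/
def leaves : VTree → List ℕ
  | .leaf x => [x]
  | .node l r => l.leaves ++ r.leaves

/-- `s.Subtree t` : `s` is a (not necessarily proper) subtree of `t`. -/
def Subtree (s : VTree) : VTree → Prop
  | .leaf x => s = .leaf x
  | .node l r => s = .node l r ∨ s.Subtree l ∨ s.Subtree r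

end VTree

/-! ## (+,×)-circuits -/

/-- The kind of a circuit gate: an input `1[x = b]`, a `+` gate, or a `×` gate. -/
inductive GateKind : Type
  | input (x : ℕ) (b : Bool)
  | plus
  | times
deriving DecidableEq

/-- A `(+,×)`-circuit over a (commutative) semiring `K`: a finite DAG (acyclicity is witnessed
by a rank function decreasing from a gate to its children) whose sources are labeled with
indicator inputs `1[x = b]`, whose internal gates are `+` or `×` gates, and where each edge
from a child into a `+` gate carries a weight (recorded by `weight g g'` for the edge from
`g'` into `g`). -/
structure Circuit (K : Type) where
  Gate : Type
  [fintypeGate : Fintype Gate]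
  [decEqGate : DecidableEq Gate]
  kind : Gate → GateKind
  child : Gate → Gate → Bool
  weight : Gate → Gate → K
  rank : Gate → ℕ
  child_rank : ∀ g g', child g g' = true → rank g' < rank g
  input_no_child : ∀ g x b, kind g = .input x b → ∀ g', child g g' = false

attribute [instance] Circuit.fintypeGate Circuit.decEqGate

namespace Circuit

variable {K : Type}

/-- The value computed by gate `g` on the assignment `α` : inputs `1[x = b]` evaluate to `1`
iff `α x = b`, a `+` gate computes the weighted sum of its children, and a `×` gate computes
the product of its children. -/
def eval [CommSemiring K] (C : Circuit K) (α : ℕ → Bool) (g : C.Gate) : K :=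
  match C.kind g with
  | GateKind.input x b => if α x = b then 1 else 0
  | GateKind.plus =>
      ∑ g' : C.Gate, if h : C.child g g' = true then C.weight g g' * C.eval α g' else 0
  | GateKind.times =>
      ∏ g' : C.Gate, if h : C.child g g' = true then C.eval α g' else 1
termination_by C.rank g
decreasing_by
  all_goals exact C.child_rank g g' h

/-- Reachability along child edges. -/
def Reaches (C : Circuit K) : C.Gate → C.Gate → Prop :=
  Relation.ReflTransGen fun a b => C.child a b = true

/-- `var(g)`: the set of variables appearing on inputs below `g`. -/
def varsBelow (C : Circuit K) (g : C.Gate) : Set ℕ :=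
  {x | ∃ g' b, C.Reaches g g' ∧ C.kind g' = GateKind.input x b}

/-- A structuring of the circuit `C` by the vtree `T`: a map `φ` from gates to (subtrees of)
`T` such that `var(g) ⊆ var(φ g)`, every `×` gate has exactly two children mapped into the
left and right subtrees of `φ g` respectively, and every `+` gate has its children mapped to
`φ g` or its descendants.  A circuit admitting such a structuring is
structured-decomposable. -/
structure StructuredBy (C : Circuit K) (T : VTree) where
  φ : C.Gate → VTree
  φ_subtree : ∀ g, (φ g).Subtree T
  φ_vars : ∀ g, C.varsBelow g ⊆ (φ g).vars
  plus_structured : ∀ g g', C.kind g = GateKind.plus → C.child g g' = true →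
    (φ g').Subtree (φ g)
  times_structured : ∀ g, C.kind g = GateKind.times →
    ∃ l r gl gr, φ g = VTree.node l r ∧ gl ≠ gr ∧
      (∀ g', C.child g g' = true ↔ (g' = gl ∨ g' = gr)) ∧
      (φ gl).Subtree l ∧ (φ gr).Subtree r

/-- A circuit is deterministic when for every `+` gate and every two distinct children the
product of the corresponding weighted summands is the zero function. -/
def Deterministic [CommSemiring K] (C : Circuit K) : Prop :=
  ∀ g g₁ g₂, C.kind g = GateKind.plus → C.child g g₁ = true → C.child g g₂ = true →
    g₁ ≠ g₂ → ∀ α, (C.weight g g₁ * C.eval α g₁) * (C.weight g g₂ * C.eval α g₂) = 0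

/-- A structured-decomposable circuit is a decision circuit when every `+` gate has the form
`g₀·1[x = 0] + g₁·1[x = 1]` for some variable `x`: its children are exactly two `×` gates,
one having the input `1[x = 0]` as one of its two children and the other having the input
`1[x = 1]` as one of its two children. -/
def Decision (C : Circuit K) : Prop :=
  ∀ g, C.kind g = GateKind.plus →
    ∃ x m₀ m₁ g₀ g₁ i₀ i₁,
      m₀ ≠ m₁ ∧
      (∀ g', C.child g g' = true ↔ (g' = m₀ ∨ g' = m₁)) ∧
      C.kind m₀ = GateKind.times ∧ C.kind m₁ = GateKind.times ∧
      C.kind i₀ = GateKind.input x false ∧ C.kind i₁ = GateKind.input x true ∧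
      g₀ ≠ i₀ ∧ g₁ ≠ i₁ ∧
      (∀ c, C.child m₀ c = true ↔ (c = g₀ ∨ c = i₀)) ∧
      (∀ c, C.child m₁ c = true ↔ (c = g₁ ∨ c = i₁))

end Circuit

/-! ## Tree tensor networks -/

/-- A (binary) tree tensor network over `K`, indexed by the dimension `d` of its root:
a leaf labeled with the variable `x` carries a `2 × d` tensor, and an internal node with
children of dimensions `dl` and `dr` carries a `dl × dr × d` tensor. -/
inductive TTN (K : Type) : ℕ → Type
  | leaf (x : ℕ) {d : ℕ} (A : Bool → Fin d → K) : TTN K d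
  | node {dl dr d : ℕ} (l : TTN K dl) (r : TTN K dr)
      (A : Fin dl → Fin dr → Fin d → K) : TTN K d

namespace TTN

variable {K : Type}

/-- The `d` pseudo-Boolean functions `Â(v)[·,k]` represented by a TTN, evaluated on a (total)
assignment `α` of the Boolean variables. -/
def eval [CommSemiring K] : ∀ {d : ℕ}, TTN K d → (ℕ → Bool) → Fin d → K
  | _, .leaf x A, α, k => A (α x) k
  | _, @TTN.node _ dl dr _ l r A, α, k =>
      ∑ i : Fin dl, ∑ j : Fin dr, A i j k * (eval l α i * eval r α j)

/-- The underlying vtree (tree shape with leaf labels) of a TTN. -/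
def shape : ∀ {d : ℕ}, TTN K d → VTree
  | _, .leaf x _ => VTree.leaf x
  | _, .node l r _ => VTree.node l.shape r.shape

/-- `TTN.Sub u t` : the node `u` is a (not necessarily proper) subtree of the TTN `t`. -/
inductive Sub : ∀ {d₁ d₂ : ℕ}, TTN K d₁ → TTN K d₂ → Prop
  | refl {d} (t : TTN K d) : Sub t t
  | left {d₀ dl dr d} (s : TTN K d₀) (l : TTN K dl) (r : TTN K dr)
      (A : Fin dl → Fin dr → Fin d → K) : Sub s l → Sub s (TTN.node l r A)
  | right {d₀ dl dr d} (s : TTN K d₀) (l : TTN K dl) (r : TTN K dr)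
      (A : Fin dl → Fin dr → Fin d → K) : Sub s r → Sub s (TTN.node l r A)

/-- A TTN is deterministic when at every internal node `v`, for every `k` and every two
distinct nonzero entries `A(v)[i₁,j₁,k]`, `A(v)[i₂,j₂,k]`, the entrywise product of the
`i₁`-th and `i₂`-th represented functions of the left child vanishes, or that of the
`j₁`-th and `j₂`-th represented functions of the right child vanishes. -/
def Deterministic [CommSemiring K] : ∀ {d : ℕ}, TTN K d → Prop
  | _, .leaf _ _ => True
  | _, @TTN.node _ dl dr d l r A =>
      Deterministic l ∧ Deterministic r ∧
      ∀ (k : Fin d) (i₁ i₂ : Fin dl) (j₁ j₂ : Fin dr),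
        (i₁, j₁) ≠ (i₂, j₂) → A i₁ j₁ k ≠ 0 → A i₂ j₂ k ≠ 0 →
        (∀ α, eval l α i₁ * eval l α i₂ = 0) ∨ (∀ α, eval r α j₁ * eval r α j₂ = 0)

/-- The local condition of a decision TTN at an internal node with children `l`, `r` and
tensor `A` (following the case distinction on which children are leaves). -/
def DecisionNodeCond [CommSemiring K] :
    ∀ {dl dr d : ℕ}, TTN K dl → TTN K dr → (Fin dl → Fin dr → Fin d → K) → Prop
  | _, _, _, .leaf _ _, .leaf _ _, _ => True
  | _, _, _, .node _ _ _, .node _ _ _, A =>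
      ∀ k i₁ j₁ i₂ j₂, A i₁ j₁ k ≠ 0 → A i₂ j₂ k ≠ 0 → (i₁, j₁) = (i₂, j₂)
  | _, _, _, .node _ _ _, .leaf _ Ar, A =>
      ∀ k, ∃ j₀ k₀ j₁ k₁, ∀ i j, A i j k ≠ 0 →
        ((i, j) = (j₀, k₀) ∧ Ar true k₀ = 0) ∨ ((i, j) = (j₁, k₁) ∧ Ar false k₁ = 0)
  | _, _, _, .leaf _ Al, .node _ _ _, A =>
      ∀ k, ∃ j₀ k₀ j₁ k₁, ∀ i j, A i j k ≠ 0 →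
        ((i, j) = (k₀, j₀) ∧ Al true k₀ = 0) ∨ ((i, j) = (k₁, j₁) ∧ Al false k₁ = 0)

/-- A decision TTN: at every leaf each column of the tensor has a zero in the `x = 0` row or
in the `x = 1` row; at every internal node both of whose children are internal every slice
`A(v)[·,·,k]` has at most one nonzero entry; and at every internal node with exactly one leaf
child every slice has at most two nonzero entries whose leaf-side columns vanish at `x = 1`
and at `x = 0` respectively. -/
def Decision [CommSemiring K] : ∀ {d : ℕ}, TTN K d → Prop
  | _, .leaf _ A => ∀ i, A false i = 0 ∨ A true i = 0
  | _, .node l r A => Decision l ∧ Decision r ∧ DecisionNodeCond l r A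

end TTN

namespace Circuit
variable {K : Type} [CommSemiring K]

theorem eval_input (C : Circuit K) (α : ℕ → Bool) (g : C.Gate) {x : ℕ} {b : Bool}
    (h : C.kind g = .input x b) : C.eval α g = if α x = b then 1 else 0 := by
  rw [eval, h]

theorem eval_plus (C : Circuit K) (α : ℕ → Bool) (g : C.Gate)
    (h : C.kind g = .plus) :
    C.eval α g = ∑ g' : C.Gate,
      if C.child g g' = true then C.weight g g' * C.eval α g' else 0 := by
  rw [eval, h]
  exact Finset.sum_congr rfl fun g' _ => by by_cases hc : C.child g g' = true <;> simp [hc]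

theorem eval_times (C : Circuit K) (α : ℕ → Bool) (g : C.Gate)
    (h : C.kind g = .times) :
    C.eval α g = ∏ g' : C.Gate, if C.child g g' = true then C.eval α g' else 1 := by
  rw [eval, h]
  exact Finset.prod_congr rfl fun g' _ => by by_cases hc : C.child g g' = true <;> simp [hc]

end Circuit
namespace Circuit
variable {K : Type}

/-- An embedding of circuits: faithfully preserves kinds, children, and weights. -/
structure Emb (C C' : Circuit K) where
  e : C.Gate → C'.Gate
  inj : Function.Injective e
  kind_eq : ∀ g, C'.kind (e g) = C.kind g
  child_iff : ∀ g g', C'.child (e g) g' = true ↔ ∃ g₂, g' = e g₂ ∧ C.child g g₂ = true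
  weight_eq : ∀ g g₂, C'.weight (e g) (e g₂) = C.weight g g₂

theorem Emb.child_e_iff {C C' : Circuit K} (E : Emb C C') (g g₂ : C.Gate) :
    C'.child (E.e g) (E.e g₂) = true ↔ C.child g g₂ = true := by
  rw [E.child_iff]
  constructor
  · rintro ⟨g₃, he, hc⟩; rwa [E.inj he]
  · exact fun hc => ⟨g₂, rfl, hc⟩

theorem Emb.eval_eq [CommSemiring K] {C C' : Circuit K} (E : Emb C C') (g : C.Gate)
    (α : ℕ → Bool) : C'.eval α (E.e g) = C.eval α g := by
  generalize hN : C.rank g = N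
  induction N using Nat.strong_induction_on generalizing g with
  | _ N ih =>
  subst hN
  match hk : C.kind g with
  | .input x b => rw [C.eval_input α g hk, C'.eval_input α _ ((E.kind_eq g).trans hk)]
  | .plus =>
      rw [C.eval_plus α g hk, C'.eval_plus α _ ((E.kind_eq g).trans hk)]
      rw [show (∑ g' : C'.Gate, if C'.child (E.e g) g' = true then
            C'.weight (E.e g) g' * C'.eval α g' else 0)
          = ∑ g' ∈ Finset.univ.image E.e, (if C'.child (E.e g) g' = true then
            C'.weight (E.e g) g' * C'.eval α g' else 0) from
        (Finset.sum_subset (Finset.subset_univ _) (by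
          intro g' _ hg'
          have : ¬ C'.child (E.e g) g' = true := by
            rw [E.child_iff]
            rintro ⟨g₂, rfl, -⟩
            exact hg' (Finset.mem_image_of_mem _ (Finset.mem_univ _))
          simp [this])).symm]
      rw [Finset.sum_image (fun a _ b _ h => E.inj h)]
      refine Finset.sum_congr rfl fun g₂ _ => ?_
      by_cases hc : C.child g g₂ = true
      · rw [if_pos ((E.child_e_iff g g₂).2 hc), if_pos hc, E.weight_eq,
          ih _ (C.child_rank g g₂ hc) g₂ rfl]
      · rw [if_neg (fun h => hc ((E.child_e_iff g g₂).1 h)), if_neg hc]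
  | .times =>
      rw [C.eval_times α g hk, C'.eval_times α _ ((E.kind_eq g).trans hk)]
      rw [show (∏ g' : C'.Gate, if C'.child (E.e g) g' = true then C'.eval α g' else 1)
          = ∏ g' ∈ Finset.univ.image E.e, (if C'.child (E.e g) g' = true then
            C'.eval α g' else 1) from
        (Finset.prod_subset (Finset.subset_univ _) (by
          intro g' _ hg'
          have : ¬ C'.child (E.e g) g' = true := by
            rw [E.child_iff]
            rintro ⟨g₂, rfl, -⟩
            exact hg' (Finset.mem_image_of_mem _ (Finset.mem_univ _))
          simp [this])).symm]
      rw [Finset.prod_image (fun a _ b _ h => E.inj h)]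
      refine Finset.prod_congr rfl fun g₂ _ => ?_
      by_cases hc : C.child g g₂ = true
      · rw [if_pos ((E.child_e_iff g g₂).2 hc), if_pos hc,
          ih _ (C.child_rank g g₂ hc) g₂ rfl]
      · rw [if_neg (fun h => hc ((E.child_e_iff g g₂).1 h)), if_neg hc]

theorem Emb.reaches {C C' : Circuit K} (E : Emb C C') {g : C.Gate} {h : C'.Gate}
    (hr : C'.Reaches (E.e g) h) : ∃ g', h = E.e g' ∧ C.Reaches g g' := by
  induction hr with
  | refl => exact ⟨g, rfl, Relation.ReflTransGen.refl⟩
  | tail _ step ih =>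
      obtain ⟨g', rfl, hg'⟩ := ih
      obtain ⟨g₂, rfl, hc⟩ := (E.child_iff g' _).1 step
      exact ⟨g₂, rfl, hg'.tail hc⟩

theorem Emb.varsBelow_subset {C C' : Circuit K} (E : Emb C C') (g : C.Gate) :
    C'.varsBelow (E.e g) ⊆ C.varsBelow g := by
  rintro x ⟨g', b, hr, hk⟩
  obtain ⟨g₂, rfl, hr₂⟩ := E.reaches hr
  exact ⟨g₂, b, hr₂, (E.kind_eq g₂).symm.trans hk⟩

end Circuit
namespace VTree

theorem Subtree.refl' : ∀ t : VTree, t.Subtree t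
  | .leaf _ => rfl
  | .node _ _ => Or.inl rfl

theorem subtree_leaves_subset : ∀ {s t : VTree}, s.Subtree t → ∀ x ∈ s.leaves, x ∈ t.leaves := by
  intro s t
  induction t with
  | leaf y => rintro rfl x hx; exact hx
  | node l r ihl ihr =>
      rintro (rfl | h | h) x hx
      · exact hx
      · simp only [leaves, List.mem_append]; exact Or.inl (ihl h x hx)
      · simp only [leaves, List.mem_append]; exact Or.inr (ihr h x hx)

theorem leaves_ne_nil : ∀ t : VTree, t.leaves ≠ [] := by
  intro t
  induction t with
  | leaf x => simp [leaves]
  | node l r ihl ihr => simp only [leaves]; exact fun h => ihl (List.append_eq_nil_iff.1 h).1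

theorem subtree_length : ∀ {s t : VTree}, s.Subtree t → s.leaves.length ≤ t.leaves.length := by
  intro s t
  induction t with
  | leaf y => rintro rfl; exact le_rfl
  | node l r ihl ihr =>
      rintro (rfl | h | h)
      · exact le_rfl
      · refine le_trans (ihl h) ?_
        simp [leaves]
      · refine le_trans (ihr h) ?_
        simp [leaves]

theorem subtree_vars : ∀ {s t : VTree}, s.Subtree t → s.vars ⊆ t.vars := by
  intro s t
  induction t with
  | leaf y => rintro rfl; exact fun _ h => h
  | node l r ihl ihr =>
      rintro (rfl | h | h)
      · exact fun _ h => h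
      · exact fun x hx => Or.inl (ihl h hx)
      · exact fun x hx => Or.inr (ihr h hx)

theorem mem_vars_of_mem_leaves : ∀ {t : VTree} {x : ℕ}, x ∈ t.leaves → x ∈ t.vars := by
  intro t
  induction t with
  | leaf y => intro x hx; simp [leaves] at hx; simp [vars, hx]
  | node l r ihl ihr =>
      intro x hx
      simp only [leaves, List.mem_append] at hx
      rcases hx with h | h
      · exact Or.inl (ihl h)
      · exact Or.inr (ihr h)

/-- A proper `node` extension is not a subtree of its own left part: size argument. -/
theorem not_subtree_node_left (l r : VTree) : ¬ (VTree.node l r).Subtree l := by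
  intro h
  have := subtree_length h
  simp only [leaves, List.length_append] at this
  have : 0 < r.leaves.length := List.length_pos_iff.2 (leaves_ne_nil r)
  omega

theorem not_subtree_node_right (l r : VTree) : ¬ (VTree.node l r).Subtree r := by
  intro h
  have := subtree_length h
  simp only [leaves, List.length_append] at this
  have : 0 < l.leaves.length := List.length_pos_iff.2 (leaves_ne_nil l)
  omega

end VTree

namespace TTN

theorem sub_shape_subtree {K : Type} :
    ∀ {d₁ d₂ : ℕ} {u : TTN K d₁} {t : TTN K d₂}, u.Sub t → u.shape.Subtree t.shape := by
  intro d₁ d₂ u t h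
  induction h with
  | refl t => exact VTree.Subtree.refl' _
  | left s l r A _ ih => exact Or.inr (Or.inl ih)
  | right s l r A _ ih => exact Or.inr (Or.inr ih)

end TTN
section NodeCircuit

variable {K : Type} [CommSemiring K] {dl dr d : ℕ}

/-- The circuit combining circuits for the two children of a TTN node with fresh `×` gates
`(i,j)` and fresh `+` gates `k` computing `∑ i j, A i j k · gl i · gr j`. -/
def nodeCircuit (Cl Cr : Circuit K) (gl : Fin dl → Cl.Gate) (gr : Fin dr → Cr.Gate)
    (A : Fin dl → Fin dr → Fin d → K) : Circuit K where
  Gate := (Cl.Gate ⊕ Cr.Gate) ⊕ ((Fin dl × Fin dr) ⊕ Fin d)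
  kind g := match g with
    | .inl (.inl g) => Cl.kind g
    | .inl (.inr g) => Cr.kind g
    | .inr (.inl _) => .times
    | .inr (.inr _) => .plus
  child g g' := match g, g' with
    | .inl (.inl g), .inl (.inl g') => Cl.child g g'
    | .inl (.inr g), .inl (.inr g') => Cr.child g g'
    | .inr (.inl p), .inl (.inl g') => decide (g' = gl p.1)
    | .inr (.inl p), .inl (.inr g') => decide (g' = gr p.2)
    | .inr (.inr _), .inr (.inl _) => true
    | _, _ => false
  weight g g' := match g, g' with
    | .inl (.inl g), .inl (.inl g') => Cl.weight g g'
    | .inl (.inr g), .inl (.inr g') => Cr.weight g g'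
    | .inr (.inr k), .inr (.inl p) => A p.1 p.2 k
    | _, _ => 0
  rank g := match g with
    | .inl (.inl g) => Cl.rank g
    | .inl (.inr g) => Cr.rank g
    | .inr (.inl _) => (Finset.univ.sup Cl.rank ⊔ Finset.univ.sup Cr.rank) + 1
    | .inr (.inr _) => (Finset.univ.sup Cl.rank ⊔ Finset.univ.sup Cr.rank) + 2
  child_rank := by
    rintro ((g | g) | (⟨i, j⟩ | k)) ((g' | g') | (⟨i', j'⟩ | k')) h <;>
      dsimp only at h ⊢ <;>
      first
      | exact Cl.child_rank _ _ h
      | exact Cr.child_rank _ _ h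
      | (rw [decide_eq_true_iff] at h; subst h;
         exact lt_of_le_of_lt (le_sup_of_le_left (Finset.le_sup (Finset.mem_univ _)))
           (Nat.lt_succ_self _))
      | (rw [decide_eq_true_iff] at h; subst h;
         exact lt_of_le_of_lt (le_sup_of_le_right (Finset.le_sup (Finset.mem_univ _)))
           (Nat.lt_succ_self _))
      | omega
      | exact absurd h (by simp)
  input_no_child := by
    rintro ((g | g) | (⟨i, j⟩ | k)) x b hk ((g' | g') | (⟨i', j'⟩ | k')) <;>
      dsimp only at hk ⊢ <;>
      first
      | rfl
      | exact Cl.input_no_child _ _ _ hk _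
      | exact Cr.input_no_child _ _ _ hk _
      | exact absurd hk (by simp)

end NodeCircuit
section NodeCircuit2

variable {K : Type} [CommSemiring K] {dl dr d : ℕ}
variable (Cl Cr : Circuit K) (gl : Fin dl → Cl.Gate) (gr : Fin dr → Cr.Gate)
  (A : Fin dl → Fin dr → Fin d → K)

/-- The left component embeds into the node circuit. -/
def nodeEmbL : Circuit.Emb Cl (nodeCircuit Cl Cr gl gr A) where
  e g := .inl (.inl g)
  inj a b h := Sum.inl_injective (Sum.inl_injective h)
  kind_eq g := rfl
  child_iff g g' := by
    rcases g' with ((g' | g') | (⟨i', j'⟩ | k')) <;> simp [nodeCircuit]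
  weight_eq g g₂ := rfl

/-- The right component embeds into the node circuit. -/
def nodeEmbR : Circuit.Emb Cr (nodeCircuit Cl Cr gl gr A) where
  e g := .inl (.inr g)
  inj a b h := Sum.inr_injective (Sum.inl_injective h)
  kind_eq g := rfl
  child_iff g g' := by
    rcases g' with ((g' | g') | (⟨i', j'⟩ | k')) <;> simp [nodeCircuit]
  weight_eq g g₂ := rfl

theorem nodeCircuit_eval_times (i : Fin dl) (j : Fin dr) (α : ℕ → Bool) :
    (nodeCircuit Cl Cr gl gr A).eval α (.inr (.inl (i, j)))
      = Cl.eval α (gl i) * Cr.eval α (gr j) := by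
  refine (Circuit.eval_times (nodeCircuit Cl Cr gl gr A) α (.inr (.inl (i, j))) rfl).trans ?_
  show (∏ g' : (Cl.Gate ⊕ Cr.Gate) ⊕ ((Fin dl × Fin dr) ⊕ Fin d),
      if (nodeCircuit Cl Cr gl gr A).child (.inr (.inl (i, j))) g' = true
      then (nodeCircuit Cl Cr gl gr A).eval α g' else 1) = _
  rw [Fintype.prod_sum_type, Fintype.prod_sum_type, Fintype.prod_sum_type]
  have h1 : (∏ g' : Cl.Gate,
      if (nodeCircuit Cl Cr gl gr A).child (.inr (.inl (i, j))) (.inl (.inl g')) = true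
      then (nodeCircuit Cl Cr gl gr A).eval α (.inl (.inl g')) else 1)
      = (nodeCircuit Cl Cr gl gr A).eval α (.inl (.inl (gl i))) := by
    have : ∀ g' : Cl.Gate,
        ((nodeCircuit Cl Cr gl gr A).child (.inr (.inl (i, j))) (.inl (.inl g')) = true)
        = (g' = gl i) := by
      intro g'; show (decide (g' = gl i) = true) = _
      simp
    simp only [this]
    simp
  have h2 : (∏ g' : Cr.Gate,
      if (nodeCircuit Cl Cr gl gr A).child (.inr (.inl (i, j))) (.inl (.inr g')) = true
      then (nodeCircuit Cl Cr gl gr A).eval α (.inl (.inr g')) else 1)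
      = (nodeCircuit Cl Cr gl gr A).eval α (.inl (.inr (gr j))) := by
    have : ∀ g' : Cr.Gate,
        ((nodeCircuit Cl Cr gl gr A).child (.inr (.inl (i, j))) (.inl (.inr g')) = true)
        = (g' = gr j) := by
      intro g'; show (decide (g' = gr j) = true) = _
      simp
    simp only [this]
    simp
  have h3 : (∏ p : Fin dl × Fin dr,
      if (nodeCircuit Cl Cr gl gr A).child (.inr (.inl (i, j))) (.inr (.inl p)) = true
      then (nodeCircuit Cl Cr gl gr A).eval α (.inr (.inl p)) else 1) = 1 := by
    apply Finset.prod_eq_one; intro p _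
    rw [if_neg]; show ¬ (false = true); simp
  have h4 : (∏ k' : Fin d,
      if (nodeCircuit Cl Cr gl gr A).child (.inr (.inl (i, j))) (.inr (.inr k')) = true
      then (nodeCircuit Cl Cr gl gr A).eval α (.inr (.inr k')) else 1) = 1 := by
    apply Finset.prod_eq_one; intro p _
    rw [if_neg]; show ¬ (false = true); simp
  rw [h1, h2, h3, h4, mul_one]
  rw [show (nodeCircuit Cl Cr gl gr A).eval α (Sum.inl (Sum.inl (gl i))) = Cl.eval α (gl i)
      from (nodeEmbL Cl Cr gl gr A).eval_eq (gl i) α,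
    show (nodeCircuit Cl Cr gl gr A).eval α (Sum.inl (Sum.inr (gr j))) = Cr.eval α (gr j)
      from (nodeEmbR Cl Cr gl gr A).eval_eq (gr j) α, mul_one]

theorem nodeCircuit_eval_plus (k : Fin d) (α : ℕ → Bool) :
    (nodeCircuit Cl Cr gl gr A).eval α (.inr (.inr k))
      = ∑ i : Fin dl, ∑ j : Fin dr, A i j k * (Cl.eval α (gl i) * Cr.eval α (gr j)) := by
  refine (Circuit.eval_plus (nodeCircuit Cl Cr gl gr A) α (.inr (.inr k)) rfl).trans ?_
  show (∑ g' : (Cl.Gate ⊕ Cr.Gate) ⊕ ((Fin dl × Fin dr) ⊕ Fin d),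
      if (nodeCircuit Cl Cr gl gr A).child (.inr (.inr k)) g' = true
      then (nodeCircuit Cl Cr gl gr A).weight (.inr (.inr k)) g'
        * (nodeCircuit Cl Cr gl gr A).eval α g' else 0) = _
  rw [Fintype.sum_sum_type, Fintype.sum_sum_type, Fintype.sum_sum_type]
  have h1 : (∑ g' : Cl.Gate,
      if (nodeCircuit Cl Cr gl gr A).child (.inr (.inr k)) (.inl (.inl g')) = true
      then (nodeCircuit Cl Cr gl gr A).weight (.inr (.inr k)) (.inl (.inl g'))
        * (nodeCircuit Cl Cr gl gr A).eval α (.inl (.inl g')) else 0) = 0 := by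
    apply Finset.sum_eq_zero; intro p _
    rw [if_neg]; show ¬ (false = true); simp
  have h2 : (∑ g' : Cr.Gate,
      if (nodeCircuit Cl Cr gl gr A).child (.inr (.inr k)) (.inl (.inr g')) = true
      then (nodeCircuit Cl Cr gl gr A).weight (.inr (.inr k)) (.inl (.inr g'))
        * (nodeCircuit Cl Cr gl gr A).eval α (.inl (.inr g')) else 0) = 0 := by
    apply Finset.sum_eq_zero; intro p _
    rw [if_neg]; show ¬ (false = true); simp
  have h4 : (∑ k' : Fin d,
      if (nodeCircuit Cl Cr gl gr A).child (.inr (.inr k)) (.inr (.inr k')) = true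
      then (nodeCircuit Cl Cr gl gr A).weight (.inr (.inr k)) (.inr (.inr k'))
        * (nodeCircuit Cl Cr gl gr A).eval α (.inr (.inr k')) else 0) = 0 := by
    apply Finset.sum_eq_zero; intro p _
    rw [if_neg]; show ¬ (false = true); simp
  rw [h1, h2, h4, zero_add, add_zero]
  rw [Fintype.sum_prod_type (f := fun p : Fin dl × Fin dr =>
    if (nodeCircuit Cl Cr gl gr A).child (.inr (.inr k)) (.inr (.inl p)) = true
    then (nodeCircuit Cl Cr gl gr A).weight (.inr (.inr k)) (.inr (.inl p))
      * (nodeCircuit Cl Cr gl gr A).eval α (.inr (.inl p)) else 0)]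
  rw [zero_add]
  refine Finset.sum_congr rfl fun i _ => Finset.sum_congr rfl fun j _ => ?_
  have hc : (nodeCircuit Cl Cr gl gr A).child (.inr (.inr k)) (.inr (.inl (i, j))) = true := rfl
  rw [if_pos hc, nodeCircuit_eval_times]
  rfl

end NodeCircuit2
section LeafCircuit

variable {K : Type} [CommSemiring K] {d : ℕ}

/-- The circuit for a TTN leaf labeled `x` with tensor `A`: `d` `+` gates and the two
inputs `1[x = 0]`, `1[x = 1]`. -/
def leafCircuit (x : ℕ) (A : Bool → Fin d → K) : Circuit K where
  Gate := Fin d ⊕ Bool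
  kind g := match g with
    | .inl _ => .plus
    | .inr b => .input x b
  child g g' := match g, g' with
    | .inl _, .inr _ => true
    | _, _ => false
  weight g g' := match g, g' with
    | .inl k, .inr b => A b k
    | _, _ => 0
  rank g := match g with
    | .inl _ => 1
    | .inr _ => 0
  child_rank := by
    rintro (k | b) (k' | b') h <;> dsimp only at h ⊢ <;>
      first
      | omega
      | exact absurd h (by simp)
  input_no_child := by
    rintro (k | b) x' b' hk (k' | b'') <;> dsimp only at hk ⊢ <;>
      first
      | rfl
      | exact absurd hk (by simp)

theorem leafCircuit_eval (x : ℕ) (A : Bool → Fin d → K) (k : Fin d) (α : ℕ → Bool) :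
    (leafCircuit x A).eval α (.inl k) = A (α x) k := by
  refine (Circuit.eval_plus (leafCircuit x A) α (.inl k) rfl).trans ?_
  show (∑ g' : Fin d ⊕ Bool,
      if (leafCircuit x A).child (.inl k) g' = true
      then (leafCircuit x A).weight (.inl k) g' * (leafCircuit x A).eval α g' else 0) = _
  rw [Fintype.sum_sum_type]
  have h1 : (∑ k' : Fin d,
      if (leafCircuit x A).child (.inl k) (.inl k') = true
      then (leafCircuit x A).weight (.inl k) (.inl k') * (leafCircuit x A).eval α (.inl k')
      else 0) = 0 := by
    apply Finset.sum_eq_zero; intro p _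
    rw [if_neg]; show ¬ (false = true); simp
  rw [h1, zero_add]
  have h2 : ∀ b : Bool, (leafCircuit x A).eval α (.inr b) = if α x = b then 1 else 0 :=
    fun b => Circuit.eval_input _ α _ rfl
  rw [Fintype.sum_bool]
  have hc : ∀ b : Bool, (leafCircuit x A).child (.inl k) (.inr b) = true := fun b => rfl
  rw [if_pos (hc true), if_pos (hc false), h2, h2]
  show A true k * _ + A false k * _ = _
  cases hx : α x <;> simp

end LeafCircuit
theorem ttn_to_circuit_aux {K : Type} [CommSemiring K] {d : ℕ} (t : TTN K d)
    (hnodup : t.shape.leaves.Nodup) (hdet : t.Deterministic) :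
    ∃ (C : Circuit K) (S : C.StructuredBy t.shape),
      C.Deterministic ∧
      ∀ (d' : ℕ) (u : TTN K d'), TTN.Sub u t →
        ∃ gs : Fin d' → C.Gate, Function.Injective gs ∧
          (∀ k, C.kind (gs k) = GateKind.plus ∧ S.φ (gs k) = u.shape) ∧
          (∀ g, C.kind g = GateKind.plus → S.φ g = u.shape → ∃ k, g = gs k) ∧
          (∀ (k : Fin _) (α : ℕ → Bool), C.eval α (gs k) = u.eval α k) := by
  induction t with
  | @leaf x dd A =>
      refine ⟨leafCircuit x A,
        { φ := fun _ => VTree.leaf x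
          φ_subtree := fun g => rfl
          φ_vars := by
            rintro g y ⟨g', b', hr, hk⟩
            rcases g' with k' | b''
            · exact absurd hk (by simp [leafCircuit])
            · have hxy : y = x := by
                have h2 : GateKind.input x b'' = GateKind.input y b' := hk
                injection h2 with h3 h4
                exact h3.symm
              exact hxy ▸ rfl
          plus_structured := fun _ _ _ _ => rfl
          times_structured := by
            rintro (k | b) hk <;> exact absurd hk (by simp [leafCircuit]) }, ?_, ?_⟩
      · rintro (k | b) g₁ g₂ hk hc1 hc2 hne α
        · rcases g₁ with k₁ | b₁
          · exact absurd hc1 (by simp [leafCircuit])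
          rcases g₂ with k₂ | b₂
          · exact absurd hc2 (by simp [leafCircuit])
          have hb : b₁ ≠ b₂ := fun h => hne (by rw [h])
          have he : ∀ b : Bool, (leafCircuit x A).eval α (.inr b) = if α x = b then 1 else 0 :=
            fun b => Circuit.eval_input _ α _ rfl
          rw [he, he]
          show (A b₁ k * _) * (A b₂ k * _) = 0
          cases hx : α x <;> cases b₁ <;> cases b₂ <;> simp_all
        · exact absurd hk (by simp [leafCircuit])
      · intro d' u hsub
        cases hsub
        refine ⟨fun k => .inl k, fun a b h => Sum.inl_injective h, fun k => ⟨rfl, rfl⟩, ?_, ?_⟩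
        · rintro (k | b) hk hφ
          · exact ⟨k, rfl⟩
          · exact absurd hk (by simp [leafCircuit])
        · intro k α
          rw [leafCircuit_eval]
          rfl
  | @node dl dr dd l r A ihl ihr =>
      simp only [TTN.shape, VTree.leaves, List.nodup_append] at hnodup
      obtain ⟨hnl, hnr, hdisj⟩ := hnodup
      obtain ⟨hdl, hdr, hA⟩ := hdet
      obtain ⟨Cl, Sl, detl, faml⟩ := ihl hnl hdl
      obtain ⟨Cr, Sr, detr, famr⟩ := ihr hnr hdr
      obtain ⟨gl, gl_inj, gl_prop, gl_char, gl_eval⟩ := faml dl l (TTN.Sub.refl l)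
      obtain ⟨gr, gr_inj, gr_prop, gr_char, gr_eval⟩ := famr dr r (TTN.Sub.refl r)
      refine ⟨nodeCircuit Cl Cr gl gr A,
        { φ := fun g => match g with
            | .inl (.inl g) => Sl.φ g
            | .inl (.inr g) => Sr.φ g
            | .inr _ => VTree.node l.shape r.shape
          φ_subtree := by
            rintro ((g | g) | (p | k))
            · exact Or.inr (Or.inl (Sl.φ_subtree g))
            · exact Or.inr (Or.inr (Sr.φ_subtree g))
            · exact VTree.Subtree.refl' _
            · exact VTree.Subtree.refl' _
          φ_vars := by
            have key : ∀ (g' : (Cl.Gate ⊕ Cr.Gate) ⊕ ((Fin dl × Fin dr) ⊕ Fin dd))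
                (y : ℕ) (b : Bool),
                (nodeCircuit Cl Cr gl gr A).kind g' = GateKind.input y b →
                y ∈ (VTree.node l.shape r.shape).vars := by
              rintro ((g' | g') | (p | k)) y b hk
              · exact Or.inl (VTree.subtree_vars (Sl.φ_subtree g')
                  (Sl.φ_vars g' ⟨g', b, Relation.ReflTransGen.refl, hk⟩))
              · exact Or.inr (VTree.subtree_vars (Sr.φ_subtree g')
                  (Sr.φ_vars g' ⟨g', b, Relation.ReflTransGen.refl, hk⟩))
              · exact absurd hk (by simp [nodeCircuit])
              · exact absurd hk (by simp [nodeCircuit])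
            rintro ((g | g) | (p | k))
            · exact fun y hy => Sl.φ_vars g
                ((nodeEmbL Cl Cr gl gr A).varsBelow_subset g hy)
            · exact fun y hy => Sr.φ_vars g
                ((nodeEmbR Cl Cr gl gr A).varsBelow_subset g hy)
            · rintro y ⟨g', b, hr, hk⟩
              exact key g' y b hk
            · rintro y ⟨g', b, hr, hk⟩
              exact key g' y b hk
          plus_structured := by
            rintro ((g | g) | (p | k)) g' hk hc
            · rcases g' with ((g' | g') | (p' | k'))
              · exact Sl.plus_structured g g' hk hc
              all_goals exact absurd hc (by simp [nodeCircuit])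
            · rcases g' with ((g' | g') | (p' | k'))
              · exact absurd hc (by simp [nodeCircuit])
              · exact Sr.plus_structured g g' hk hc
              all_goals exact absurd hc (by simp [nodeCircuit])
            · exact absurd hk (by simp [nodeCircuit])
            · rcases g' with ((g' | g') | (p' | k'))
              · exact absurd hc (by simp [nodeCircuit])
              · exact absurd hc (by simp [nodeCircuit])
              · exact VTree.Subtree.refl' _
              · exact absurd hc (by simp [nodeCircuit])
          times_structured := by
            rintro ((g | g) | (⟨i, j⟩ | k)) hk
            · obtain ⟨L, R, gL, gR, hφ, hne, hchild, hL, hR⟩ := Sl.times_structured g hk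
              refine ⟨L, R, .inl (.inl gL), .inl (.inl gR), hφ,
                fun h => hne (Sum.inl_injective (Sum.inl_injective h)), ?_, hL, hR⟩
              rintro ((g' | g') | (p' | k')) <;>
                simp only [nodeCircuit, hchild, Sum.inl.injEq, Sum.inr.injEq] <;>
                simp [nodeCircuit]
            · obtain ⟨L, R, gL, gR, hφ, hne, hchild, hL, hR⟩ := Sr.times_structured g hk
              refine ⟨L, R, .inl (.inr gL), .inl (.inr gR), hφ,
                fun h => hne (Sum.inr_injective (Sum.inl_injective h)), ?_, hL, hR⟩
              rintro ((g' | g') | (p' | k')) <;>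
                simp only [nodeCircuit, hchild, Sum.inl.injEq, Sum.inr.injEq] <;>
                simp [nodeCircuit]
            · refine ⟨l.shape, r.shape, .inl (.inl (gl i)), .inl (.inr (gr j)), rfl,
                fun (h : (Sum.inl (Sum.inl (gl i)) : (Cl.Gate ⊕ Cr.Gate) ⊕ ((Fin dl × Fin dr) ⊕ Fin dd)) = Sum.inl (Sum.inr (gr j))) => Sum.inl_ne_inr (Sum.inl_injective h), ?_, ?_, ?_⟩
              · rintro ((g' | g') | (p' | k')) <;> simp [nodeCircuit]
              · show (Sl.φ (gl i)).Subtree l.shape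
                rw [(gl_prop i).2]
                exact VTree.Subtree.refl' _
              · show (Sr.φ (gr j)).Subtree r.shape
                rw [(gr_prop j).2]
                exact VTree.Subtree.refl' _
            · exact absurd hk (by simp [nodeCircuit]) }, ?_, ?_⟩
      · -- determinism
        rintro ((g | g) | (⟨i, j⟩ | k)) g₁ g₂ hk hc1 hc2 hne α
        · rcases g₁ with ((g₁ | g₁) | (p₁ | k₁))
          case inl.inr => exact absurd hc1 (by simp [nodeCircuit])
          case inr.inl => exact absurd hc1 (by simp [nodeCircuit])
          case inr.inr => exact absurd hc1 (by simp [nodeCircuit])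
          rcases g₂ with ((g₂ | g₂) | (p₂ | k₂))
          case inl.inr => exact absurd hc2 (by simp [nodeCircuit])
          case inr.inl => exact absurd hc2 (by simp [nodeCircuit])
          case inr.inr => exact absurd hc2 (by simp [nodeCircuit])
          have hne' : g₁ ≠ g₂ := fun h => hne (by rw [h])
          have := detl g g₁ g₂ hk hc1 hc2 hne' α
          rw [show (nodeCircuit Cl Cr gl gr A).eval α (.inl (.inl g₁)) = Cl.eval α g₁
              from (nodeEmbL Cl Cr gl gr A).eval_eq g₁ α,
            show (nodeCircuit Cl Cr gl gr A).eval α (.inl (.inl g₂)) = Cl.eval α g₂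
              from (nodeEmbL Cl Cr gl gr A).eval_eq g₂ α]
          exact this
        · rcases g₁ with ((g₁ | g₁) | (p₁ | k₁))
          case inl.inl => exact absurd hc1 (by simp [nodeCircuit])
          case inr.inl => exact absurd hc1 (by simp [nodeCircuit])
          case inr.inr => exact absurd hc1 (by simp [nodeCircuit])
          rcases g₂ with ((g₂ | g₂) | (p₂ | k₂))
          case inl.inl => exact absurd hc2 (by simp [nodeCircuit])
          case inr.inl => exact absurd hc2 (by simp [nodeCircuit])
          case inr.inr => exact absurd hc2 (by simp [nodeCircuit])
          have hne' : g₁ ≠ g₂ := fun h => hne (by rw [h])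
          have := detr g g₁ g₂ hk hc1 hc2 hne' α
          rw [show (nodeCircuit Cl Cr gl gr A).eval α (.inl (.inr g₁)) = Cr.eval α g₁
              from (nodeEmbR Cl Cr gl gr A).eval_eq g₁ α,
            show (nodeCircuit Cl Cr gl gr A).eval α (.inl (.inr g₂)) = Cr.eval α g₂
              from (nodeEmbR Cl Cr gl gr A).eval_eq g₂ α]
          exact this
        · exact absurd hk (by simp [nodeCircuit])
        · rcases g₁ with ((g₁ | g₁) | (⟨i₁, j₁⟩ | k₁))
          case inl.inl => exact absurd hc1 (by simp [nodeCircuit])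
          case inl.inr => exact absurd hc1 (by simp [nodeCircuit])
          case inr.inr => exact absurd hc1 (by simp [nodeCircuit])
          rcases g₂ with ((g₂ | g₂) | (⟨i₂, j₂⟩ | k₂))
          case inl.inl => exact absurd hc2 (by simp [nodeCircuit])
          case inl.inr => exact absurd hc2 (by simp [nodeCircuit])
          case inr.inr => exact absurd hc2 (by simp [nodeCircuit])
          have hne' : (i₁, j₁) ≠ (i₂, j₂) := fun h => hne (by rw [show i₁ = i₂ from congrArg Prod.fst h, show j₁ = j₂ from congrArg Prod.snd h])
          show (A i₁ j₁ k * (nodeCircuit Cl Cr gl gr A).eval α (.inr (.inl (i₁, j₁))))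
            * (A i₂ j₂ k * (nodeCircuit Cl Cr gl gr A).eval α (.inr (.inl (i₂, j₂)))) = 0
          rw [nodeCircuit_eval_times, nodeCircuit_eval_times, gl_eval, gr_eval,
            gl_eval, gr_eval]
          by_cases hA1 : A i₁ j₁ k = 0
          · simp [hA1]
          by_cases hA2 : A i₂ j₂ k = 0
          · simp [hA2]
          have hre : (A i₁ j₁ k * (l.eval α i₁ * r.eval α j₁))
              * (A i₂ j₂ k * (l.eval α i₂ * r.eval α j₂))
              = (A i₁ j₁ k * A i₂ j₂ k) *
                ((l.eval α i₁ * l.eval α i₂) * (r.eval α j₁ * r.eval α j₂)) := by ring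
          rw [hre]
          rcases hA k i₁ i₂ j₁ j₂ hne' hA1 hA2 with hz | hz
          · rw [hz α]; ring
          · rw [hz α]; ring
      · -- the family of + gates for each subtree
        intro d' u hsub
        cases hsub with
        | refl =>
            refine ⟨fun k => .inr (.inr k),
              fun a b h => Sum.inr_injective (Sum.inr_injective h),
              fun k => ⟨rfl, rfl⟩, ?_, ?_⟩
            · rintro ((g | g) | (p | k)) hk hφ
              · exact absurd (hφ ▸ Sl.φ_subtree g) (VTree.not_subtree_node_left _ _)
              · exact absurd (hφ ▸ Sr.φ_subtree g) (VTree.not_subtree_node_right _ _)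
              · exact absurd hk (by simp [nodeCircuit])
              · exact ⟨k, rfl⟩
            · intro k α
              rw [nodeCircuit_eval_plus]
              simp only [gl_eval, gr_eval]
              rfl
        | left _ _ _ _ hsub' =>
            obtain ⟨gs, gs_inj, gs_prop, gs_char, gs_eval⟩ := faml d' u hsub'
            refine ⟨fun k => .inl (.inl (gs k)),
              fun a b h => gs_inj (Sum.inl_injective (Sum.inl_injective h)),
              fun k => ⟨(gs_prop k).1, (gs_prop k).2⟩, ?_, ?_⟩
            · rintro ((g | g) | (p | k)) hk hφ
              · obtain ⟨k, rfl⟩ := gs_char g hk hφ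
                exact ⟨k, rfl⟩
              · obtain ⟨y, hy⟩ := List.exists_mem_of_ne_nil _ (VTree.leaves_ne_nil u.shape)
                have hyl : y ∈ l.shape.leaves :=
                  VTree.subtree_leaves_subset (TTN.sub_shape_subtree hsub') y hy
                have hyr : y ∈ r.shape.leaves :=
                  VTree.subtree_leaves_subset (hφ ▸ Sr.φ_subtree g) y hy
                exact (hdisj y hyl y hyr rfl).elim
              · exact absurd hk (by simp [nodeCircuit])
              · have : u.shape.Subtree l.shape := TTN.sub_shape_subtree hsub'
                rw [← hφ] at this
                exact absurd this (VTree.not_subtree_node_left _ _)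
            · intro k α
              exact ((nodeEmbL Cl Cr gl gr A).eval_eq (gs k) α).trans (gs_eval k α)
        | right _ _ _ _ hsub' =>
            obtain ⟨gs, gs_inj, gs_prop, gs_char, gs_eval⟩ := famr d' u hsub'
            refine ⟨fun k => .inl (.inr (gs k)),
              fun a b h => gs_inj (Sum.inr_injective (Sum.inl_injective h)),
              fun k => ⟨(gs_prop k).1, (gs_prop k).2⟩, ?_, ?_⟩
            · rintro ((g | g) | (p | k)) hk hφ
              · obtain ⟨y, hy⟩ := List.exists_mem_of_ne_nil _ (VTree.leaves_ne_nil u.shape)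
                have hyr : y ∈ r.shape.leaves :=
                  VTree.subtree_leaves_subset (TTN.sub_shape_subtree hsub') y hy
                have hyl : y ∈ l.shape.leaves :=
                  VTree.subtree_leaves_subset (hφ ▸ Sl.φ_subtree g) y hy
                exact (hdisj y hyl y hyr rfl).elim
              · obtain ⟨k, rfl⟩ := gs_char g hk hφ
                exact ⟨k, rfl⟩
              · exact absurd hk (by simp [nodeCircuit])
              · have : u.shape.Subtree r.shape := TTN.sub_shape_subtree hsub'
                rw [← hφ] at this
                exact absurd this (VTree.not_subtree_node_right _ _)
            · intro k α
              exact ((nodeEmbR Cl Cr gl gr A).eval_eq (gs k) α).trans (gs_eval k α)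

/-- from a deterministic TTN to a deterministic structured-decomposable
circuit, with exactly `d(v)` `+` gates per vtree node computing the functions
`Â(v)[·,k]`. -/
theorem deterministic_ttn_to_circuit {K : Type} [CommSemiring K] {s : ℕ} (t : TTN K s)
    (hnodup : t.shape.leaves.Nodup) (hdet : t.Deterministic) :
    ∃ (C : Circuit K) (S : C.StructuredBy t.shape) (out : Fin s → C.Gate),
      C.Deterministic ∧
      (∀ (k : Fin s) (α : ℕ → Bool), C.eval α (out k) = t.eval α k) ∧
      (∀ (d' : ℕ) (u : TTN K d'), TTN.Sub u t →
        ∃ gs : Fin d' → C.Gate, Function.Injective gs ∧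
          (∀ k, C.kind (gs k) = GateKind.plus ∧ S.φ (gs k) = u.shape) ∧
          (∀ g, C.kind g = GateKind.plus → S.φ g = u.shape → ∃ k, g = gs k) ∧
          (∀ (k : Fin d') (α : ℕ → Bool), C.eval α (gs k) = u.eval α k)) := by
  obtain ⟨C, S, hdet', fam⟩ := ttn_to_circuit_aux t hnodup hdet
  obtain ⟨gs, -, -, -, hevals⟩ := fam s t (TTN.Sub.refl t)
  exact ⟨C, S, gs, hdet', hevals, fam⟩
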